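/- arXiv:0809.0638 — 2 statements merged into one kernel-verified Lean document; each statement's English description precedes it below -/
import Mathlib

section
/- In the field Frac k[t_m : m ∈ ℤ], the family (y_m)_{m ∈ ℤ, m ≠ 1} with y_m = t_m/t_1^m is algebraically independent over k. -/
variable (k : Type*) [Field k]

/-- The image of the indeterminate `t_m` in `Frac k[t_m : m ∈ ℤ]`. -/
noncomputable def t (m : ℤ) : FractionRing (MvPolynomial ℤ k) :=
  algebraMap (MvPolynomial ℤ k) (FractionRing (MvPolynomial ℤ k)) (MvPolynomial.X m)

/-- The element `y_m = t_m / t_1^m`. -/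
noncomputable def y (m : ℤ) : FractionRing (MvPolynomial ℤ k) :=
  t k m / t k 1 ^ m

lemma t_ne_zero (m : ℤ) : t k m ≠ 0 := by
  simp only [t]
  intro h
  have := (map_eq_zero_iff _
    (IsFractionRing.injective (MvPolynomial ℤ k) (FractionRing (MvPolynomial ℤ k)))).mp h
  exact MvPolynomial.X_ne_zero m this

/-- The Laurent monomial `∏ t_m ^ e m`. -/
noncomputable def T (e : ℤ →₀ ℤ) : FractionRing (MvPolynomial ℤ k) :=
  e.prod fun m z => t k m ^ z

lemma T_zero : T k 0 = 1 := by simp [T]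

lemma T_add (e e' : ℤ →₀ ℤ) : T k (e + e') = T k e * T k e' :=
  Finsupp.prod_add_index' (fun m => zpow_zero _) (fun m a b => zpow_add₀ (t_ne_zero k m) a b)

lemma T_single (m z : ℤ) : T k (Finsupp.single m z) = t k m ^ z :=
  Finsupp.prod_single_index (zpow_zero _)

lemma T_nsmul (n : ℕ) (e : ℤ →₀ ℤ) : T k (n • e) = T k e ^ n := by
  induction n with
  | zero => simp [T_zero]
  | succ n ih => rw [succ_nsmul, T_add, ih, pow_succ]

lemma T_monomial (e : ℤ →₀ ℕ) :
    T k (e.mapRange (fun n : ℕ => (n : ℤ)) rfl) =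
      algebraMap (MvPolynomial ℤ k) (FractionRing (MvPolynomial ℤ k))
        (MvPolynomial.monomial e 1) := by
  rw [T, Finsupp.prod_mapRange_index (fun m => zpow_zero _), MvPolynomial.monomial_eq,
    map_mul, map_finsuppProd]
  simp [t, zpow_natCast]

lemma T_linearIndependent : LinearIndependent k (T k) := by
  rw [linearIndependent_iff']
  intro s g hsum e0 he0
  classical
  set A := IsScalarTower.toAlgHom k (MvPolynomial ℤ k) (FractionRing (MvPolynomial ℤ k)) with hA
  set d : ℤ →₀ ℤ := ∑ e ∈ s, e.mapRange (fun z => max (-z) 0) (by simp) with hd_def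
  have hd : ∀ e ∈ s, ∀ m : ℤ, 0 ≤ (e + d) m := by
    intro e he m
    have h1 : (e.mapRange (fun z => max (-z) 0) (by simp)) m ≤ d m := by
      rw [hd_def, Finsupp.finset_sum_apply]
      have hnn : ∀ e' ∈ s, (0:ℤ) ≤ (e'.mapRange (fun z => max (-z) 0) (by simp)) m := by
        intro e' _
        rw [Finsupp.mapRange_apply]
        exact le_max_of_le_right le_rfl
      exact Finset.single_le_sum hnn he
    have h2 : -(e m) ≤ d m := by
      rw [Finsupp.mapRange_apply] at h1
      exact le_trans (le_max_left _ _) h1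
    simp only [Finsupp.add_apply]
    omega
  set n : (ℤ →₀ ℤ) → (ℤ →₀ ℕ) := fun e => (e + d).mapRange Int.toNat Int.toNat_zero with hn_def
  have hcast : ∀ e ∈ s, (n e).mapRange (fun n : ℕ => (n : ℤ)) rfl = e + d := by
    intro e he
    ext m
    simp only [hn_def, Finsupp.mapRange_apply]
    exact Int.toNat_of_nonneg (hd e he m)
  have key : ∀ e ∈ s, T k e * T k d = A (MvPolynomial.monomial (n e) 1) := by
    intro e he
    have h := T_monomial k (n e)
    rw [hcast e he] at h
    rw [← T_add, h]
    rfl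
  have hninj : ∀ e ∈ s, n e = n e0 → e = e0 := by
    intro e he hne
    have : e + d = e0 + d := by
      rw [← hcast e he, ← hcast e0 he0, hne]
    exact add_right_cancel this
  have hsum2 : A (∑ e ∈ s, g e • MvPolynomial.monomial (n e) 1) = 0 := by
    rw [map_sum]
    have : ∀ e ∈ s, A (g e • MvPolynomial.monomial (n e) 1) = (g e • T k e) * T k d := by
      intro e he
      rw [map_smul, ← key e he, smul_mul_assoc]
    rw [Finset.sum_congr rfl this, ← Finset.sum_mul, hsum, zero_mul]
  have hA_inj : Function.Injective A := by
    have : (A : MvPolynomial ℤ k → FractionRing (MvPolynomial ℤ k)) =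
        algebraMap (MvPolynomial ℤ k) (FractionRing (MvPolynomial ℤ k)) := rfl
    rw [this]
    exact IsFractionRing.injective _ _
  have hzero : (∑ e ∈ s, g e • MvPolynomial.monomial (n e) (1 : k)) = 0 := by
    apply hA_inj
    simpa using hsum2
  have hc := congrArg (MvPolynomial.coeff (n e0)) hzero
  rw [MvPolynomial.coeff_sum] at hc
  simp only [MvPolynomial.coeff_smul, MvPolynomial.coeff_monomial, MvPolynomial.coeff_zero] at hc
  rw [Finset.sum_eq_single e0] at hc
  · simpa using hc
  · intro e he hne
    rw [if_neg (fun h => hne (hninj e he h))]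
    simp
  · intro h; exact absurd he0 h

lemma T_finsetSum {ι : Type*} (s : Finset ι) (f : ι → (ℤ →₀ ℤ)) :
    T k (∑ i ∈ s, f i) = ∏ i ∈ s, T k (f i) := by
  classical
  induction s using Finset.induction with
  | empty => simp [T_zero]
  | insert _ _ h ih => rw [Finset.sum_insert h, Finset.prod_insert h, T_add, ih]

/-- The exponent finsupp of `y_m`, namely `e_m - m·e_1`. -/
noncomputable def b (i : {m : ℤ // m ≠ 1}) : ℤ →₀ ℤ :=
  Finsupp.single i.1 1 + Finsupp.single 1 (-i.1)

lemma T_b (i : {m : ℤ // m ≠ 1}) : T k (b i) = y k i.1 := by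
  rw [b, T_add, T_single, T_single, y, zpow_one, zpow_neg, div_eq_mul_inv]

/-- The exponent of the monomial `∏ y_i ^ d i`. -/
noncomputable def B (d : {m : ℤ // m ≠ 1} →₀ ℕ) : ℤ →₀ ℤ :=
  d.sum fun i n => n • b i

lemma T_B (d : {m : ℤ // m ≠ 1} →₀ ℕ) :
    d.prod (fun i n => y k i.1 ^ n) = T k (B d) := by
  rw [B, Finsupp.sum, T_finsetSum, Finsupp.prod]
  apply Finset.prod_congr rfl
  intro i _
  rw [T_nsmul, T_b]

lemma b_apply (i i0 : {m : ℤ // m ≠ 1}) :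
    (b i) i0.1 = if i = i0 then 1 else 0 := by
  rw [b, Finsupp.add_apply, Finsupp.single_apply, Finsupp.single_apply,
    if_neg (Ne.symm i0.2), add_zero]
  by_cases h : i = i0
  · rw [if_pos (by rw [h]), if_pos h]
  · rw [if_neg (fun hh => h (Subtype.ext hh)), if_neg h]

lemma B_apply (d : {m : ℤ // m ≠ 1} →₀ ℕ) (i0 : {m : ℤ // m ≠ 1}) :
    (B d) i0.1 = (d i0 : ℤ) := by
  classical
  rw [B, Finsupp.sum_apply, Finsupp.sum]
  rw [Finset.sum_eq_single i0]
  · rw [Finsupp.smul_apply, b_apply, if_pos rfl, nsmul_eq_mul, mul_one]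
  · intro i _ hne
    rw [Finsupp.smul_apply, b_apply, if_neg hne, smul_zero]
  · intro h
    rw [Finsupp.notMem_support_iff.mp h, zero_smul, Finsupp.zero_apply]

lemma B_injective : Function.Injective B := by
  intro d d' h
  ext i0
  have := B_apply d i0
  rw [h, B_apply] at this
  exact_mod_cast this.symm

/-- In `Frac k[t_m : m ∈ ℤ]`, the family `(y_m)_{m ≠ 1}`, `y_m = t_m / t_1^m`,
is algebraically independent over `k`. -/
theorem y_algebraicIndependent :
    AlgebraicIndependent k (fun m : {m : ℤ // m ≠ 1} => y k m.1) := by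
  have hli : LinearIndependent k (fun d : ({m : ℤ // m ≠ 1} →₀ ℕ) => T k (B d)) :=
    (T_linearIndependent k).comp B B_injective
  rw [algebraicIndependent_iff]
  intro p hp
  rw [MvPolynomial.aeval_def, MvPolynomial.eval₂_eq] at hp
  have hre : ∀ d ∈ p.support,
      (algebraMap k (FractionRing (MvPolynomial ℤ k)) (p.coeff d)) *
        ∏ i ∈ d.support, (fun m : {m : ℤ // m ≠ 1} => y k m.1) i ^ d i
        = p.coeff d • T k (B d) := by
    intro d _
    rw [← T_B, Finsupp.prod, Algebra.smul_def]
  rw [Finset.sum_congr rfl hre] at hp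
  have hall := linearIndependent_iff'.mp hli p.support (fun d => p.coeff d) hp
  ext d
  by_cases h : d ∈ p.support
  · simpa using hall d h
  · simp [MvPolynomial.notMem_support_iff.mp h]
end

section
/- Let a, b, c ∈ k with a ≠ 0 and char k ≠ 2, and A_{a,b,c} = k⟨u,v⟩/(u² − a, uv + vu − b, v² − c). Then A_{a,b,c} is a simple algebra if and only if b² − 4ac ≠ 0. -/
variable (k : Type*) [Field k]

/-- The defining relations of `A_{a,b,c}`: `u² = a`, `uv + vu = b`, `v² = c`. -/
inductive ABCRel (a b c : k) : FreeAlgebra k (Fin 2) → FreeAlgebra k (Fin 2) → Prop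
  | uu : ABCRel a b c (FreeAlgebra.ι k 0 * FreeAlgebra.ι k 0) (algebraMap k _ a)
  | anti : ABCRel a b c (FreeAlgebra.ι k 0 * FreeAlgebra.ι k 1 +
      FreeAlgebra.ι k 1 * FreeAlgebra.ι k 0) (algebraMap k _ b)
  | vv : ABCRel a b c (FreeAlgebra.ι k 1 * FreeAlgebra.ι k 1) (algebraMap k _ c)

/-- The algebra `A_{a,b,c} = k⟨u,v⟩/(u² − a, uv + vu − b, v² − c)`. -/
def ABC (a b c : k) := RingQuot (ABCRel k a b c)

noncomputable instance (a b c : k) : Ring (ABC k a b c) := by unfold ABC; infer_instance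
noncomputable instance (a b c : k) : Algebra k (ABC k a b c) := by unfold ABC; infer_instance

open scoped Quaternion
open scoped QuaternionAlgebra

/-- Simplicity transfers along ring isomorphisms. -/
lemma ABCAux.isSimpleRing_of_ringEquiv {R S : Type*} [Ring R] [Ring S] (e : R ≃+* S)
    (h : IsSimpleRing R) : IsSimpleRing S := by
  haveI := h
  haveI : Nontrivial S := by
    obtain ⟨x, y, hxy⟩ := exists_pair_ne R
    exact ⟨e x, e y, fun hxy' => hxy (e.injective hxy')⟩
  refine IsSimpleRing.of_eq_bot_or_eq_top fun I => ?_
  rcases IsSimpleRing.simple.eq_bot_or_eq_top (I.comap (e : R →+* S)) with hb | ht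
  · left
    refine SetLike.ext fun x => ?_
    simp only [TwoSidedIdeal.mem_bot]
    constructor
    · intro hx
      have : e.symm x ∈ I.comap (e : R →+* S) := by
        rw [TwoSidedIdeal.mem_comap]
        simpa using hx
      rw [hb, TwoSidedIdeal.mem_bot] at this
      have := congrArg e this
      simpa using this
    · rintro rfl; exact TwoSidedIdeal.zero_mem I
  · right
    refine SetLike.ext fun x => ?_
    simp only [TwoSidedIdeal.mem_top, iff_true]
    have : e.symm x ∈ I.comap (e : R →+* S) := ht ▸ TwoSidedIdeal.mem_top _
    rw [TwoSidedIdeal.mem_comap] at this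
    simpa using this

namespace ABCAux

variable {k}

/-- From a scalar in a two-sided ideal, get `1`. -/
lemma one_mem_of_scalar_mem {A : Type*} [Ring A] [Algebra k A] (I : TwoSidedIdeal A)
    {α : k} (hα : α ≠ 0) (h : (algebraMap k A α) ∈ I) : (1 : A) ∈ I := by
  have := I.mul_mem_left (algebraMap k A α⁻¹) _ h
  rwa [← map_mul, inv_mul_cancel₀ hα, map_one] at this

set_option maxHeartbeats 1000000 in
/-- The simplicity criterion for quaternion algebras. -/
lemma quat_simple (h2 : (2 : k) ≠ 0) (a d : k) (ha : a ≠ 0) :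
    IsSimpleRing ℍ[k, a, d] ↔ d ≠ 0 := by
  constructor
  · intro hs hd
    subst hd
    -- the ideal of elements with re = imI = 0 is proper and nonzero
    let I : TwoSidedIdeal ℍ[k, a, 0] := TwoSidedIdeal.mk'
      {x : ℍ[k, a, 0] | x.re = 0 ∧ x.imI = 0}
      (by simp)
      (fun {x y} hx hy => by
        simp only [Set.mem_setOf_eq] at *
        constructor <;> simp [hx.1, hx.2, hy.1, hy.2])
      (fun {x} hx => by
        simp only [Set.mem_setOf_eq] at *
        constructor <;> simp [hx.1, hx.2])
      (fun {x y} hy => by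
        simp only [Set.mem_setOf_eq] at *
        constructor <;> simp [QuaternionAlgebra.re_mul, QuaternionAlgebra.imI_mul,
          hy.1, hy.2])
      (fun {x y} hx => by
        simp only [Set.mem_setOf_eq] at *
        constructor <;> simp [QuaternionAlgebra.re_mul, QuaternionAlgebra.imI_mul,
          hx.1, hx.2])
    have hj : (⟨0, 0, 1, 0⟩ : ℍ[k, a, 0]) ∈ I := by
      rw [TwoSidedIdeal.mem_mk']
      exact ⟨rfl, rfl⟩
    rcases hs.simple.eq_bot_or_eq_top I with hb | ht
    · rw [hb, TwoSidedIdeal.mem_bot] at hj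
      have := congrArg QuaternionAlgebra.imJ hj
      simp at this
    · have h1 : (1 : ℍ[k, a, 0]) ∈ I := ht ▸ TwoSidedIdeal.mem_top _
      rw [TwoSidedIdeal.mem_mk'] at h1
      have := h1.1
      simp at this
  · intro hd
    refine IsSimpleRing.of_eq_bot_or_eq_top fun I => ?_
    rw [or_iff_not_imp_left]
    intro hbot
    rw [← TwoSidedIdeal.one_mem_iff]
    obtain ⟨x, hxI, hx0⟩ : ∃ x, x ∈ I ∧ x ≠ 0 := by
      by_contra h
      push_neg at h
      exact hbot (SetLike.ext fun y => by
        simp only [TwoSidedIdeal.mem_bot]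
        exact ⟨fun hy => h y hy, fun hy => hy ▸ TwoSidedIdeal.zero_mem I⟩)
    set qi : ℍ[k, a, d] := ⟨0, 1, 0, 0⟩ with hqi
    set qj : ℍ[k, a, d] := ⟨0, 0, 1, 0⟩ with hqj
    set qk : ℍ[k, a, d] := ⟨0, 0, 0, 1⟩ with hqk
    -- helper memberships
    have hmem_conj_i : ∀ y ∈ I, qi * y * qi ∈ I := fun y hy =>
      I.mul_mem_right _ _ (I.mul_mem_left _ _ hy)
    have hmem_conj_j : ∀ y ∈ I, qj * y * qj ∈ I := fun y hy =>
      I.mul_mem_right _ _ (I.mul_mem_left _ _ hy)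
    have hsmul : ∀ (α : k), ∀ y ∈ I, algebraMap k ℍ[k, a, d] α * y ∈ I := fun α y hy =>
      I.mul_mem_left _ _ hy
    -- step 1 : isolate (re, imI) and (imJ, imK) parts
    have hy1 : algebraMap k ℍ[k, a, d] a * x + qi * x * qi ∈ I :=
      I.add_mem (hsmul a x hxI) (hmem_conj_i x hxI)
    have hy2 : algebraMap k ℍ[k, a, d] a * x - qi * x * qi ∈ I :=
      I.sub_mem (hsmul a x hxI) (hmem_conj_i x hxI)
    have ey1 : algebraMap k ℍ[k, a, d] a * x + qi * x * qi
        = (⟨2 * a * x.re, 2 * a * x.imI, 0, 0⟩ : ℍ[k, a, d]) := by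
      ext <;> simp [hqi, QuaternionAlgebra.re_mul, QuaternionAlgebra.imI_mul,
        QuaternionAlgebra.imJ_mul, QuaternionAlgebra.imK_mul,
        QuaternionAlgebra.coe_algebraMap] <;> ring
    have ey2 : algebraMap k ℍ[k, a, d] a * x - qi * x * qi
        = (⟨0, 0, 2 * a * x.imJ, 2 * a * x.imK⟩ : ℍ[k, a, d]) := by
      ext <;> simp [hqi, QuaternionAlgebra.re_mul, QuaternionAlgebra.imI_mul,
        QuaternionAlgebra.imJ_mul, QuaternionAlgebra.imK_mul,
        QuaternionAlgebra.coe_algebraMap] <;> ring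
    rw [ey1] at hy1
    rw [ey2] at hy2
    set y1 : ℍ[k, a, d] := ⟨2 * a * x.re, 2 * a * x.imI, 0, 0⟩ with hy1def
    set y2 : ℍ[k, a, d] := ⟨0, 0, 2 * a * x.imJ, 2 * a * x.imK⟩ with hy2def
    -- step 2 : isolate each component
    have hz1 : algebraMap k ℍ[k, a, d] d * y1 + qj * y1 * qj ∈ I :=
      I.add_mem (hsmul d y1 hy1) (hmem_conj_j y1 hy1)
    have hz2 : algebraMap k ℍ[k, a, d] d * y1 - qj * y1 * qj ∈ I :=
      I.sub_mem (hsmul d y1 hy1) (hmem_conj_j y1 hy1)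
    have hz3 : algebraMap k ℍ[k, a, d] d * y2 + qj * y2 * qj ∈ I :=
      I.add_mem (hsmul d y2 hy2) (hmem_conj_j y2 hy2)
    have hz4 : algebraMap k ℍ[k, a, d] d * y2 - qj * y2 * qj ∈ I :=
      I.sub_mem (hsmul d y2 hy2) (hmem_conj_j y2 hy2)
    have ez1 : algebraMap k ℍ[k, a, d] d * y1 + qj * y1 * qj
        = algebraMap k ℍ[k, a, d] (4 * a * d * x.re) := by
      ext <;> simp [hqj, hy1def, QuaternionAlgebra.re_mul, QuaternionAlgebra.imI_mul,
        QuaternionAlgebra.imJ_mul, QuaternionAlgebra.imK_mul,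
        QuaternionAlgebra.coe_algebraMap] <;> ring
    have ez2 : algebraMap k ℍ[k, a, d] d * y1 - qj * y1 * qj
        = algebraMap k ℍ[k, a, d] (4 * a * d * x.imI) * qi := by
      ext <;> simp [hqi, hqj, hy1def, QuaternionAlgebra.re_mul, QuaternionAlgebra.imI_mul,
        QuaternionAlgebra.imJ_mul, QuaternionAlgebra.imK_mul,
        QuaternionAlgebra.coe_algebraMap] <;> ring
    have ez3 : algebraMap k ℍ[k, a, d] d * y2 + qj * y2 * qj
        = algebraMap k ℍ[k, a, d] (4 * a * d * x.imJ) * qj := by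
      ext <;> simp [hqj, hy2def, QuaternionAlgebra.re_mul, QuaternionAlgebra.imI_mul,
        QuaternionAlgebra.imJ_mul, QuaternionAlgebra.imK_mul,
        QuaternionAlgebra.coe_algebraMap] <;> ring
    have ez4 : algebraMap k ℍ[k, a, d] d * y2 - qj * y2 * qj
        = algebraMap k ℍ[k, a, d] (4 * a * d * x.imK) * qk := by
      ext <;> simp [hqj, hqk, hy2def, QuaternionAlgebra.re_mul, QuaternionAlgebra.imI_mul,
        QuaternionAlgebra.imJ_mul, QuaternionAlgebra.imK_mul,
        QuaternionAlgebra.coe_algebraMap] <;> ring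
    rw [ez1] at hz1; rw [ez2] at hz2; rw [ez3] at hz3; rw [ez4] at hz4
    have h4 : (4 : k) = 2 * 2 := by norm_num
    have h4ad : 4 * a * d ≠ 0 := by
      rw [h4]
      exact mul_ne_zero (mul_ne_zero (mul_ne_zero h2 h2) ha) hd
    -- at least one component of x is nonzero
    have hcomp : x.re ≠ 0 ∨ x.imI ≠ 0 ∨ x.imJ ≠ 0 ∨ x.imK ≠ 0 := by
      by_contra h
      push_neg at h
      exact hx0 (by ext <;> simp [h.1, h.2.1, h.2.2.1, h.2.2.2])
    rcases hcomp with h | h | h | h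
    · exact one_mem_of_scalar_mem I (mul_ne_zero h4ad h) hz1
    · have : qi * (algebraMap k ℍ[k, a, d] (4 * a * d * x.imI) * qi) ∈ I :=
        I.mul_mem_left _ _ hz2
      have e : qi * (algebraMap k ℍ[k, a, d] (4 * a * d * x.imI) * qi)
          = algebraMap k ℍ[k, a, d] (4 * a * d * x.imI * a) := by
        ext <;> simp [hqi, QuaternionAlgebra.re_mul, QuaternionAlgebra.imI_mul,
          QuaternionAlgebra.imJ_mul, QuaternionAlgebra.imK_mul,
          QuaternionAlgebra.coe_algebraMap] <;> ring
      rw [e] at this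
      exact one_mem_of_scalar_mem I (mul_ne_zero (mul_ne_zero h4ad h) ha) this
    · have : qj * (algebraMap k ℍ[k, a, d] (4 * a * d * x.imJ) * qj) ∈ I :=
        I.mul_mem_left _ _ hz3
      have e : qj * (algebraMap k ℍ[k, a, d] (4 * a * d * x.imJ) * qj)
          = algebraMap k ℍ[k, a, d] (4 * a * d * x.imJ * d) := by
        ext <;> simp [hqj, QuaternionAlgebra.re_mul, QuaternionAlgebra.imI_mul,
          QuaternionAlgebra.imJ_mul, QuaternionAlgebra.imK_mul,
          QuaternionAlgebra.coe_algebraMap] <;> ring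
      rw [e] at this
      exact one_mem_of_scalar_mem I (mul_ne_zero (mul_ne_zero h4ad h) hd) this
    · have : qk * (algebraMap k ℍ[k, a, d] (4 * a * d * x.imK) * qk) ∈ I :=
        I.mul_mem_left _ _ hz4
      have e : qk * (algebraMap k ℍ[k, a, d] (4 * a * d * x.imK) * qk)
          = algebraMap k ℍ[k, a, d] (-(4 * a * d * x.imK * a * d)) := by
        ext <;> simp [hqk, QuaternionAlgebra.re_mul, QuaternionAlgebra.imI_mul,
          QuaternionAlgebra.imJ_mul, QuaternionAlgebra.imK_mul,
          QuaternionAlgebra.coe_algebraMap] <;> ring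
      rw [e] at this
      exact one_mem_of_scalar_mem I
        (neg_ne_zero.mpr (mul_ne_zero (mul_ne_zero (mul_ne_zero h4ad h) ha) hd)) this

end ABCAux

section Iso

variable {k} (h2 : (2 : k) ≠ 0) (a b c : k) (ha : a ≠ 0)

/-- Notation for the images of the generators in `ABC`. -/
noncomputable def ABCu : ABC k a b c :=
  RingQuot.mkAlgHom k (ABCRel k a b c) (FreeAlgebra.ι k 0)

noncomputable def ABCv : ABC k a b c :=
  RingQuot.mkAlgHom k (ABCRel k a b c) (FreeAlgebra.ι k 1)

lemma ABCu_mul_ABCu : ABCu a b c * ABCu a b c = algebraMap k (ABC k a b c) a := by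
  have := RingQuot.mkAlgHom_rel k (ABCRel.uu (k := k) (a := a) (b := b) (c := c))
  simp only [map_mul, AlgHom.commutes] at this; exact this

lemma ABC_anti : ABCu a b c * ABCv a b c + ABCv a b c * ABCu a b c
    = algebraMap k (ABC k a b c) b := by
  have := RingQuot.mkAlgHom_rel k (ABCRel.anti (k := k) (a := a) (b := b) (c := c))
  simp only [map_mul, map_add, AlgHom.commutes] at this; exact this

lemma ABCv_mul_ABCv : ABCv a b c * ABCv a b c = algebraMap k (ABC k a b c) c := by
  have := RingQuot.mkAlgHom_rel k (ABCRel.vv (k := k) (a := a) (b := b) (c := c))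
  simp only [map_mul, AlgHom.commutes] at this; exact this

end Iso

set_option maxHeartbeats 1600000 in
/-- The main theorem. -/
theorem ABC_simple_iff (h2 : (2 : k) ≠ 0) (a b c : k) (ha : a ≠ 0) :
    IsSimpleRing (ABC k a b c) ↔ b ^ 2 - 4 * a * c ≠ 0 := by
  set t : k := b / (2 * a) with ht
  set d : k := c - b ^ 2 / (4 * a) with hd
  have h2a : (2 : k) * a ≠ 0 := mul_ne_zero h2 ha
  have h4a : (4 : k) * a ≠ 0 := by
    have : (4 : k) = 2 * 2 := by norm_num
    rw [this]; exact mul_ne_zero (mul_ne_zero h2 h2) ha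
  have h4' : (4 : k) ≠ 0 := left_ne_zero_of_mul h4a
  -- the forward algebra map ABC → ℍ
  set qi : ℍ[k, a, d] := ⟨0, 1, 0, 0⟩ with hqi
  set qj : ℍ[k, a, d] := ⟨0, 0, 1, 0⟩ with hqj
  have hrel : ∀ ⦃x y : FreeAlgebra k (Fin 2)⦄, ABCRel k a b c x y →
      (FreeAlgebra.lift k (fun n : Fin 2 => if n = 0 then qi else qj + t • qi)) x =
      (FreeAlgebra.lift k (fun n : Fin 2 => if n = 0 then qi else qj + t • qi)) y := by
    rintro x y (_ | _ | _) <;>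
      simp only [map_mul, map_add, FreeAlgebra.lift_ι_apply, if_pos, if_neg,
        AlgHom.commutes, Fin.isValue, reduceIte, one_ne_zero] <;>
      ext <;>
      simp [hqi, hqj, QuaternionAlgebra.re_mul, QuaternionAlgebra.imI_mul,
        QuaternionAlgebra.imJ_mul, QuaternionAlgebra.imK_mul,
        QuaternionAlgebra.coe_algebraMap, ht, hd] <;>
      field_simp <;> ring
  set φ : ABC k a b c →ₐ[k] ℍ[k, a, d] :=
    RingQuot.liftAlgHom k ⟨FreeAlgebra.lift k (fun n : Fin 2 => if n = 0 then qi else qj + t • qi),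
      hrel⟩ with hφ
  -- the quaternionic basis in ABC
  set U := ABCu (k := k) a b c with hU
  set V := ABCv (k := k) a b c with hV
  set T := algebraMap k (ABC k a b c) t with hT
  have huu : U * U = algebraMap k (ABC k a b c) a := ABCu_mul_ABCu (k := k) a b c
  have hanti : U * V + V * U = algebraMap k (ABC k a b c) b := ABC_anti (k := k) a b c
  have hvv : V * V = algebraMap k (ABC k a b c) c := ABCv_mul_ABCv (k := k) a b c
  have hTc : ∀ x : ABC k a b c, T * x = x * T := fun x => (Algebra.commutes t x)
  have hjj : (V - T * U) * (V - T * U) = d • (1 : ABC k a b c) := by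
    have expand : (V - T * U) * (V - T * U)
        = V * V - T * (U * V + V * U) + T * T * (U * U) := by
      have e1 : V * (T * U) = T * (V * U) := by
        rw [← mul_assoc, ← hTc V, mul_assoc]
      have e2 : (T * U) * (T * U) = T * T * (U * U) := by
        rw [mul_assoc T U (T * U), ← mul_assoc U T U, ← hTc U, mul_assoc, ← mul_assoc]
      rw [sub_mul, mul_sub, mul_sub, e1, e2, mul_assoc T U V, mul_add]
      abel
    rw [expand, hvv, hanti, huu, hT, ← map_mul, ← map_mul, ← map_mul, ← map_sub,
      ← map_add, Algebra.algebraMap_eq_smul_one]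
    congr 1
    rw [hd, ht]
    field_simp
    ring
  have hji : (V - T * U) * U = -(U * (V - T * U)) := by
    have e1 : (T * U) * U = T * (U * U) := by rw [mul_assoc]
    have e2 : U * (T * U) = T * (U * U) := by rw [← mul_assoc, ← hTc U, mul_assoc]
    rw [sub_mul, mul_sub, e1, e2, neg_sub, eq_sub_iff_add_eq]
    have : V * U - T * (U * U) + U * V = (U * V + V * U) - T * (U * U) := by abel
    rw [this, hanti, huu, hT, ← map_mul, ← map_sub]
    congr 1
    rw [ht]
    field_simp
    ring
  set bas : QuaternionAlgebra.Basis (ABC k a b c) a 0 d :=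
    { i := U
      j := V - T * U
      k := U * (V - T * U)
      i_mul_i := by rw [huu, Algebra.algebraMap_eq_smul_one, zero_smul, add_zero]
      j_mul_j := hjj
      i_mul_j := rfl
      j_mul_i := by rw [hji, zero_smul, zero_sub] } with hbas
  set ψ : ℍ[k, a, d] →ₐ[k] ABC k a b c := bas.liftHom with hψ
  have hφU : φ U = qi := by
    rw [hφ, hU]
    show (RingQuot.liftAlgHom k ⟨FreeAlgebra.lift k
        (fun n : Fin 2 => if n = 0 then qi else qj + t • qi), hrel⟩)
      (RingQuot.mkAlgHom k (ABCRel k a b c) (FreeAlgebra.ι k 0)) = qi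
    exact (RingQuot.liftAlgHom_mkAlgHom_apply k _ hrel _).trans (by simp)
  have hφV : φ V = qj + t • qi := by
    rw [hφ, hV]
    show (RingQuot.liftAlgHom k ⟨FreeAlgebra.lift k
        (fun n : Fin 2 => if n = 0 then qi else qj + t • qi), hrel⟩)
      (RingQuot.mkAlgHom k (ABCRel k a b c) (FreeAlgebra.ι k 1)) = qj + t • qi
    exact (RingQuot.liftAlgHom_mkAlgHom_apply k _ hrel _).trans (by simp)
  -- the two maps are inverse
  have hψφ : ψ.comp φ = AlgHom.id k (ABC k a b c) := by
    apply RingQuot.ringQuot_ext'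
    apply FreeAlgebra.hom_ext
    funext n
    fin_cases n <;>
      simp only [AlgHom.coe_comp, Function.comp_apply, AlgHom.coe_id, id_eq,
        FreeAlgebra.lift_ι_apply, Fin.isValue] <;>
      simp only [hφ, RingQuot.liftAlgHom_mkAlgHom_apply, FreeAlgebra.lift_ι_apply]
    · change ψ (φ U) = U; rw [hφU]
      show ψ qi = U
      simp [hψ, QuaternionAlgebra.Basis.liftHom, QuaternionAlgebra.Basis.lift, hqi, hbas, hU]
    · change ψ (φ V) = V; rw [hφV]
      show ψ (qj + t • qi) = V
      simp only [hψ, QuaternionAlgebra.Basis.liftHom, QuaternionAlgebra.Basis.lift, hqi, hqj,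
        hbas, AlgHom.coe_mk', AlgHom.coe_mk, RingHom.coe_mk, MonoidHom.coe_mk, OneHom.coe_mk]
      simp only [QuaternionAlgebra.re_add, QuaternionAlgebra.imI_add, QuaternionAlgebra.imJ_add,
        QuaternionAlgebra.imK_add, QuaternionAlgebra.re_smul, QuaternionAlgebra.imI_smul,
        QuaternionAlgebra.imJ_smul, QuaternionAlgebra.imK_smul]
      rw [show (0 : k) + t • (0:k) = 0 by simp, show (0:k) + t • (1:k) = t by simp,
        show (1:k) + t • (0:k) = 1 by simp]
      simp only [map_zero, zero_smul, one_smul, zero_add, add_zero]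
      rw [hT, Algebra.smul_def, hU, hV]
      abel
  have hφT : φ T = algebraMap k ℍ[k, a, d] t := by
    rw [hT]; exact AlgHom.commutes _ _
  have hφψ : φ.comp ψ = AlgHom.id k ℍ[k, a, d] := by
    apply QuaternionAlgebra.hom_ext
    · show φ (ψ (QuaternionAlgebra.Basis.self k).i) = (QuaternionAlgebra.Basis.self k).i
      have h1 : ψ (QuaternionAlgebra.Basis.self k).i = U := by
        simp [hψ, QuaternionAlgebra.Basis.liftHom, QuaternionAlgebra.Basis.lift, hbas]
      rw [h1, hφU, hqi]
      ext <;> simp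
    · show φ (ψ (QuaternionAlgebra.Basis.self k).j) = (QuaternionAlgebra.Basis.self k).j
      have h1 : ψ (QuaternionAlgebra.Basis.self k).j = V - T * U := by
        simp [hψ, QuaternionAlgebra.Basis.liftHom, QuaternionAlgebra.Basis.lift, hbas]
      rw [h1, map_sub, map_mul, hφU, hφV, hφT]
      ext <;> simp [hqi, hqj, QuaternionAlgebra.re_mul, QuaternionAlgebra.imI_mul,
        QuaternionAlgebra.imJ_mul, QuaternionAlgebra.imK_mul, QuaternionAlgebra.coe_algebraMap]
  -- assemble
  have e : ℍ[k, a, d] ≃ₐ[k] ABC k a b c := AlgEquiv.ofAlgHom ψ φ hψφ hφψ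
  have key : IsSimpleRing (ABC k a b c) ↔ IsSimpleRing ℍ[k, a, d] :=
    ⟨fun h => ABCAux.isSimpleRing_of_ringEquiv e.symm.toRingEquiv h,
     fun h => ABCAux.isSimpleRing_of_ringEquiv e.toRingEquiv h⟩
  rw [key, ABCAux.quat_simple h2 a d ha]
  have hdd : b ^ 2 - 4 * a * c = -((4 * a) * d) := by
    rw [hd]
    field_simp
    try ring
  constructor
  · intro hdne hbc
    rw [hdd, neg_eq_zero, mul_eq_zero] at hbc
    exact hdne (hbc.resolve_left h4a)
  · intro hbc hdz
    apply hbc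
    rw [hdd, hdz, mul_zero, neg_zero]
end
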